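/- Let Ω ⊆ ℝ² be an open bounded set with positive Lebesgue measure, μ > 0, f : ℝ² → ℝ a C¹ function with f ≥ 0, and assume the nondegeneracy condition f(x)·‖∇f(x)‖² ≥ c > 0 for almost every x ∈ Ω. Define E(V) = ∫_Ω μ(‖∇u‖² + ‖∇v‖²) + f‖∇f‖²·‖V − ∇f‖² dx for pairs V = (u,v) of differentiable functions with square-integrable values and gradients. If V₁ and V₂ both minimize E over this class (that is, E(V₁) = E(V₂) ≤ E(W) for every admissible W), then V₁ = V₂ almost everywhere on Ω. -/

import Mathlib

open MeasureTheory

/-- The Gradient Vector Flow energy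
`E(V) = ∫_Ω μ(‖∇u‖² + ‖∇v‖²) + f‖∇f‖²·‖V − ∇f‖² dx` for `V = (u,v)`. -/
noncomputable def gvfEnergy (μ : ℝ) (f : EuclideanSpace ℝ (Fin 2) → ℝ)
    (Ω : Set (EuclideanSpace ℝ (Fin 2))) (u v : EuclideanSpace ℝ (Fin 2) → ℝ) : ℝ :=
  ∫ x in Ω, μ * (‖gradient u x‖ ^ 2 + ‖gradient v x‖ ^ 2)
    + f x * ‖gradient f x‖ ^ 2
        * ((u x - gradient f x 0) ^ 2 + (v x - gradient f x 1) ^ 2)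

/-- The admissible class: pairs `V = (u,v)` of functions that are differentiable on `Ω`,
whose values and gradients are square-integrable on `Ω`, and for which the energy
integrand is integrable (so that `E(V)` is finite). -/
def GvfAdmissible (μ : ℝ) (f : EuclideanSpace ℝ (Fin 2) → ℝ)
    (Ω : Set (EuclideanSpace ℝ (Fin 2))) (u v : EuclideanSpace ℝ (Fin 2) → ℝ) : Prop :=
  (∀ x ∈ Ω, DifferentiableAt ℝ u x) ∧ (∀ x ∈ Ω, DifferentiableAt ℝ v x) ∧
  IntegrableOn (fun x => u x ^ 2) Ω ∧ IntegrableOn (fun x => v x ^ 2) Ω ∧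
  IntegrableOn (fun x => ‖gradient u x‖ ^ 2) Ω ∧
  IntegrableOn (fun x => ‖gradient v x‖ ^ 2) Ω ∧
  IntegrableOn (fun x =>
    μ * (‖gradient u x‖ ^ 2 + ‖gradient v x‖ ^ 2)
      + f x * ‖gradient f x‖ ^ 2
          * ((u x - gradient f x 0) ^ 2 + (v x - gradient f x 1) ^ 2)) Ω

namespace GvfAux

abbrev E2 := EuclideanSpace ℝ (Fin 2)

lemma measurable_gradient' (g : E2 → ℝ) : Measurable (gradient g) :=
  ((InnerProductSpace.toDual ℝ E2).symm.continuous.measurable).comp (measurable_fderiv ℝ g)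

lemma grad_mid (u v : E2 → ℝ) (x : E2) (hu : DifferentiableAt ℝ u x)
    (hv : DifferentiableAt ℝ v x) :
    gradient (fun y => (u y + v y) / 2) x = (2⁻¹ : ℝ) • (gradient u x + gradient v x) := by
  have h : (fun y => (u y + v y) / 2) = fun y => (2⁻¹ : ℝ) * (u y + v y) := by
    funext y; ring
  rw [h]
  unfold gradient
  rw [fderiv_const_mul (a := fun y => u y + v y) (hu.add hv), fderiv_fun_add hu hv, _root_.map_smul, map_add]

lemma mid_norm_sq (a b : E2) :
    ‖(2⁻¹:ℝ) • (a + b)‖^2 = (‖a‖^2 + ‖b‖^2)/2 - ‖(2⁻¹:ℝ) • (a - b)‖^2 := by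
  have h := parallelogram_law_with_norm ℝ a b
  rw [norm_smul, norm_smul]
  simp only [norm_inv, Real.norm_ofNat]
  nlinarith [norm_nonneg (a+b), norm_nonneg (a-b)]

lemma mid_norm_le (a b : E2) : ‖(2⁻¹:ℝ) • (a + b)‖^2 ≤ ‖a‖^2 + ‖b‖^2 := by
  rw [mid_norm_sq a b]
  nlinarith [sq_nonneg ‖(2⁻¹:ℝ) • (a - b)‖, sq_nonneg ‖a‖, sq_nonneg ‖b‖]

end GvfAux

open GvfAux

set_option maxHeartbeats 2000000 in
/-- under the nondegeneracy assumption `f‖∇f‖² ≥ c > 0` a.e. on `Ω`,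
two minimizers of the GVF energy over the admissible class coincide a.e. on `Ω`. -/
theorem gvfEnergy_minimizer_unique
    (Ω : Set (EuclideanSpace ℝ (Fin 2))) (hΩo : IsOpen Ω)
    (hΩb : Bornology.IsBounded Ω) (hΩpos : 0 < volume Ω)
    (μ c : ℝ) (hμ : 0 < μ) (hc : 0 < c)
    (f : EuclideanSpace ℝ (Fin 2) → ℝ) (hf : ContDiff ℝ 1 f) (hfpos : ∀ x, 0 ≤ f x)
    (hnondeg : ∀ᵐ x ∂(volume.restrict Ω), c ≤ f x * ‖gradient f x‖ ^ 2)
    (u₁ v₁ u₂ v₂ : EuclideanSpace ℝ (Fin 2) → ℝ)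
    (hV₁ : GvfAdmissible μ f Ω u₁ v₁) (hV₂ : GvfAdmissible μ f Ω u₂ v₂)
    (heq : gvfEnergy μ f Ω u₁ v₁ = gvfEnergy μ f Ω u₂ v₂)
    (hmin : ∀ u v : EuclideanSpace ℝ (Fin 2) → ℝ, GvfAdmissible μ f Ω u v →
      gvfEnergy μ f Ω u₁ v₁ ≤ gvfEnergy μ f Ω u v) :
    ∀ᵐ x ∂(volume.restrict Ω), u₁ x = u₂ x ∧ v₁ x = v₂ x := by
  obtain ⟨hd₁u, hd₁v, hi₁u, hi₁v, hg₁u, hg₁v, hI₁⟩ := hV₁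
  obtain ⟨hd₂u, hd₂v, hi₂u, hi₂v, hg₂u, hg₂v, hI₂⟩ := hV₂
  set um : E2 → ℝ := fun x => (u₁ x + u₂ x) / 2 with hum_def
  set vm : E2 → ℝ := fun x => (v₁ x + v₂ x) / 2 with hvm_def
  -- integrands
  set I₁ : E2 → ℝ := fun x => μ * (‖gradient u₁ x‖ ^ 2 + ‖gradient v₁ x‖ ^ 2)
      + f x * ‖gradient f x‖ ^ 2
          * ((u₁ x - gradient f x 0) ^ 2 + (v₁ x - gradient f x 1) ^ 2) with hI₁_def
  set I₂ : E2 → ℝ := fun x => μ * (‖gradient u₂ x‖ ^ 2 + ‖gradient v₂ x‖ ^ 2)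
      + f x * ‖gradient f x‖ ^ 2
          * ((u₂ x - gradient f x 0) ^ 2 + (v₂ x - gradient f x 1) ^ 2) with hI₂_def
  set Im : E2 → ℝ := fun x => μ * (‖gradient um x‖ ^ 2 + ‖gradient vm x‖ ^ 2)
      + f x * ‖gradient f x‖ ^ 2
          * ((um x - gradient f x 0) ^ 2 + (vm x - gradient f x 1) ^ 2) with hIm_def
  set P : E2 → ℝ := fun x =>
      μ * (‖(2⁻¹:ℝ) • (gradient u₁ x - gradient u₂ x)‖ ^ 2
         + ‖(2⁻¹:ℝ) • (gradient v₁ x - gradient v₂ x)‖ ^ 2)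
      + f x * ‖gradient f x‖ ^ 2
          * (((u₁ x - u₂ x)/2) ^ 2 + ((v₁ x - v₂ x)/2) ^ 2) with hP_def
  have hΩm : MeasurableSet Ω := hΩo.measurableSet
  have hdmu : ∀ x ∈ Ω, DifferentiableAt ℝ um x := by
    intro x hx
    have h : DifferentiableAt ℝ (fun y => (2⁻¹:ℝ) * (u₁ y + u₂ y)) x :=
      ((hd₁u x hx).add (hd₂u x hx)).const_mul _
    exact h.congr_of_eventuallyEq (Filter.Eventually.of_forall fun y => by ring)
  have hdmv : ∀ x ∈ Ω, DifferentiableAt ℝ vm x := by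
    intro x hx
    have h : DifferentiableAt ℝ (fun y => (2⁻¹:ℝ) * (v₁ y + v₂ y)) x :=
      ((hd₁v x hx).add (hd₂v x hx)).const_mul _
    exact h.congr_of_eventuallyEq (Filter.Eventually.of_forall fun y => by ring)
  have hgum : ∀ x ∈ Ω, gradient um x = (2⁻¹:ℝ) • (gradient u₁ x + gradient u₂ x) :=
    fun x hx => grad_mid u₁ u₂ x (hd₁u x hx) (hd₂u x hx)
  have hgvm : ∀ x ∈ Ω, gradient vm x = (2⁻¹:ℝ) • (gradient v₁ x + gradient v₂ x) :=
    fun x hx => grad_mid v₁ v₂ x (hd₁v x hx) (hd₂v x hx)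
  -- continuity facts
  have hcum : ContinuousOn um Ω := fun x hx => (hdmu x hx).continuousAt.continuousWithinAt
  have hcvm : ContinuousOn vm Ω := fun x hx => (hdmv x hx).continuousAt.continuousWithinAt
  have hcgf : Continuous (gradient f) :=
    (InnerProductSpace.toDual ℝ E2).symm.continuous.comp (hf.continuous_fderiv one_ne_zero)
  have hcg0 : Continuous (fun x => gradient f x 0) := (PiLp.continuous_apply 2 _ (0 : Fin 2)).comp hcgf
  have hcg1 : Continuous (fun x => gradient f x 1) := (PiLp.continuous_apply 2 _ (1 : Fin 2)).comp hcgf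
  -- measurability of midpoint integrand pieces
  have hmgu : Measurable (fun x => ‖gradient um x‖ ^ 2) :=
    ((measurable_gradient' um).norm).pow_const 2
  have hmgv : Measurable (fun x => ‖gradient vm x‖ ^ 2) :=
    ((measurable_gradient' vm).norm).pow_const 2
  -- AESM of um, vm on restrict
  have haum : AEStronglyMeasurable um (volume.restrict Ω) := hcum.aestronglyMeasurable hΩm
  have havm : AEStronglyMeasurable vm (volume.restrict Ω) := hcvm.aestronglyMeasurable hΩm
  have haew : AEStronglyMeasurable (fun x => f x * ‖gradient f x‖ ^ 2) (volume.restrict Ω) :=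
    (hf.continuous.mul (hcgf.norm.pow 2)).aestronglyMeasurable
  have haIm : AEStronglyMeasurable Im (volume.restrict Ω) := by
    apply AEStronglyMeasurable.add
    · exact (aestronglyMeasurable_const.mul
        ((hmgu.aestronglyMeasurable).add (hmgv.aestronglyMeasurable)))
    · exact haew.mul
        (((haum.sub hcg0.aestronglyMeasurable).pow 2).add
         ((havm.sub hcg1.aestronglyMeasurable).pow 2))
  have haeΩ : ∀ᵐ x ∂(volume.restrict Ω), x ∈ Ω := ae_restrict_mem hΩm
  -- pointwise convexity identity on Ω
  have hkey : ∀ᵐ x ∂(volume.restrict Ω), Im x = (I₁ x + I₂ x) / 2 - P x := by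
    filter_upwards [haeΩ] with x hx
    simp only [hIm_def, hI₁_def, hI₂_def, hP_def, hum_def, hvm_def]
    rw [hgum x hx, hgvm x hx, mid_norm_sq, mid_norm_sq]
    ring
  -- nonnegativity of P a.e.
  have hPnonneg : ∀ᵐ x ∂(volume.restrict Ω), 0 ≤ P x := by
    filter_upwards [hnondeg] with x hw
    have h0 : (0:ℝ) ≤ f x * ‖gradient f x‖ ^ 2 := le_trans hc.le hw
    have := sq_nonneg ‖(2⁻¹:ℝ) • (gradient u₁ x - gradient u₂ x)‖
    have := sq_nonneg ‖(2⁻¹:ℝ) • (gradient v₁ x - gradient v₂ x)‖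
    have := sq_nonneg ((u₁ x - u₂ x)/2)
    have := sq_nonneg ((v₁ x - v₂ x)/2)
    simp only [hP_def]
    nlinarith
  -- admissibility of the midpoint
  have hadm : GvfAdmissible μ f Ω um vm := by
    refine ⟨hdmu, hdmv, ?_, ?_, ?_, ?_, ?_⟩
    · apply (hi₁u.add hi₂u).mono' ((haum.pow 2))
      filter_upwards with x
      simp only [Pi.add_apply, Pi.pow_apply, Real.norm_eq_abs, abs_le, hum_def]
      constructor <;> nlinarith [sq_nonneg (u₁ x - u₂ x), sq_nonneg (u₁ x + u₂ x),
        sq_nonneg (u₁ x), sq_nonneg (u₂ x)]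
    · apply (hi₁v.add hi₂v).mono' ((havm.pow 2))
      filter_upwards with x
      simp only [Pi.add_apply, Pi.pow_apply, Real.norm_eq_abs, abs_le, hvm_def]
      constructor <;> nlinarith [sq_nonneg (v₁ x - v₂ x), sq_nonneg (v₁ x + v₂ x),
        sq_nonneg (v₁ x), sq_nonneg (v₂ x)]
    · apply (hg₁u.add hg₂u).mono' hmgu.aestronglyMeasurable
      filter_upwards [haeΩ] with x hx
      rw [Real.norm_eq_abs, abs_of_nonneg (sq_nonneg _), hgum x hx]
      exact mid_norm_le _ _
    · apply (hg₁v.add hg₂v).mono' hmgv.aestronglyMeasurable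
      filter_upwards [haeΩ] with x hx
      rw [Real.norm_eq_abs, abs_of_nonneg (sq_nonneg _), hgvm x hx]
      exact mid_norm_le _ _
    · apply (hI₁.add hI₂).mono' haIm
      filter_upwards [haeΩ] with x hx
      have hw0 : (0:ℝ) ≤ f x * ‖gradient f x‖ ^ 2 :=
        mul_nonneg (hfpos x) (sq_nonneg _)
      have hImnn : 0 ≤ Im x := by
        simp only [hIm_def]
        nlinarith [sq_nonneg ‖gradient um x‖, sq_nonneg ‖gradient vm x‖,
          sq_nonneg (um x - gradient f x 0), sq_nonneg (vm x - gradient f x 1)]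
      rw [Real.norm_eq_abs, abs_of_nonneg hImnn]
      -- Im x ≤ I₁ x + I₂ x
      simp only [hIm_def, hI₁_def, hI₂_def, Pi.add_apply]
      rw [hgum x hx, hgvm x hx]
      have h1 := mid_norm_le (gradient u₁ x) (gradient u₂ x)
      have h2 := mid_norm_le (gradient v₁ x) (gradient v₂ x)
      have h3 : (um x - gradient f x 0)^2
          ≤ (u₁ x - gradient f x 0)^2 + (u₂ x - gradient f x 0)^2 := by
        simp only [hum_def]
        nlinarith [sq_nonneg (u₁ x - u₂ x), sq_nonneg (u₁ x + u₂ x - 2 * gradient f x 0)]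
      have h4 : (vm x - gradient f x 1)^2
          ≤ (v₁ x - gradient f x 1)^2 + (v₂ x - gradient f x 1)^2 := by
        simp only [hvm_def]
        nlinarith [sq_nonneg (v₁ x - v₂ x), sq_nonneg (v₁ x + v₂ x - 2 * gradient f x 1)]
      calc μ * (‖(2⁻¹:ℝ) • (gradient u₁ x + gradient u₂ x)‖ ^ 2
              + ‖(2⁻¹:ℝ) • (gradient v₁ x + gradient v₂ x)‖ ^ 2)
            + f x * ‖gradient f x‖ ^ 2
              * ((um x - gradient f x 0) ^ 2 + (vm x - gradient f x 1) ^ 2)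
          ≤ μ * ((‖gradient u₁ x‖ ^ 2 + ‖gradient u₂ x‖ ^ 2)
              + (‖gradient v₁ x‖ ^ 2 + ‖gradient v₂ x‖ ^ 2))
            + f x * ‖gradient f x‖ ^ 2
              * (((u₁ x - gradient f x 0) ^ 2 + (u₂ x - gradient f x 0) ^ 2)
               + ((v₁ x - gradient f x 1) ^ 2 + (v₂ x - gradient f x 1) ^ 2)) := by
            exact add_le_add
              (mul_le_mul_of_nonneg_left (add_le_add h1 h2) hμ.le)
              (mul_le_mul_of_nonneg_left (add_le_add h3 h4) hw0)
        _ = (μ * (‖gradient u₁ x‖ ^ 2 + ‖gradient v₁ x‖ ^ 2)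
              + f x * ‖gradient f x‖ ^ 2
                * ((u₁ x - gradient f x 0) ^ 2 + (v₁ x - gradient f x 1) ^ 2))
            + (μ * (‖gradient u₂ x‖ ^ 2 + ‖gradient v₂ x‖ ^ 2)
              + f x * ‖gradient f x‖ ^ 2
                * ((u₂ x - gradient f x 0) ^ 2 + (v₂ x - gradient f x 1) ^ 2)) := by
            ring
  have hImInt : IntegrableOn Im Ω := hadm.2.2.2.2.2.2
  -- integrability of P
  have hAint : Integrable (fun x => (I₁ x + I₂ x) / 2) (volume.restrict Ω) :=
    (hI₁.add hI₂).div_const 2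
  have hPint : Integrable P (volume.restrict Ω) := by
    apply (hAint.sub hImInt).congr
    filter_upwards [hkey] with x hx
    simp only [Pi.sub_apply]
    linarith
  -- the energies
  have hEm : gvfEnergy μ f Ω um vm = ∫ x in Ω, Im x := rfl
  have hE₁ : gvfEnergy μ f Ω u₁ v₁ = ∫ x in Ω, I₁ x := rfl
  have hE₂ : gvfEnergy μ f Ω u₂ v₂ = ∫ x in Ω, I₂ x := rfl
  have hI₁' : Integrable I₁ (volume.restrict Ω) := hI₁
  have hI₂' : Integrable I₂ (volume.restrict Ω) := hI₂
  have hsplit : ∫ x in Ω, Im x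
      = ((∫ x in Ω, I₁ x) + ∫ x in Ω, I₂ x) / 2 - ∫ x in Ω, P x := by
    rw [integral_congr_ae hkey, integral_sub hAint hPint]
    congr 1
    rw [integral_div, integral_add hI₁' hI₂']
  have hminm := hmin um vm hadm
  rw [hEm, hE₁, hsplit] at hminm
  rw [hE₁, hE₂] at heq
  rw [heq] at hminm
  have hPle : ∫ x in Ω, P x ≤ 0 := by linarith
  have hPge : 0 ≤ ∫ x in Ω, P x := integral_nonneg_of_ae hPnonneg
  have hPzero : ∫ x in Ω, P x = 0 := le_antisymm hPle hPge
  have hPae : P =ᵐ[volume.restrict Ω] 0 :=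
    (integral_eq_zero_iff_of_nonneg_ae hPnonneg hPint).mp hPzero
  filter_upwards [hPae, hnondeg] with x hP0 hw
  have hP0' : P x = 0 := hP0
  simp only [hP_def] at hP0'
  have hw0 : (0:ℝ) < f x * ‖gradient f x‖ ^ 2 := lt_of_lt_of_le hc hw
  have hs : ((u₁ x - u₂ x)/2) ^ 2 + ((v₁ x - v₂ x)/2) ^ 2 ≤ 0 := by
    nlinarith [sq_nonneg ‖(2⁻¹:ℝ) • (gradient u₁ x - gradient u₂ x)‖,
      sq_nonneg ‖(2⁻¹:ℝ) • (gradient v₁ x - gradient v₂ x)‖,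
      sq_nonneg ((u₁ x - u₂ x)/2), sq_nonneg ((v₁ x - v₂ x)/2)]
  constructor
  · have h1 : ((u₁ x - u₂ x)/2) ^ 2 = 0 :=
      le_antisymm (by nlinarith [sq_nonneg ((v₁ x - v₂ x)/2)]) (sq_nonneg _)
    have := pow_eq_zero_iff (n := 2) (by norm_num) |>.mp h1
    linarith
  · have h1 : ((v₁ x - v₂ x)/2) ^ 2 = 0 :=
      le_antisymm (by nlinarith [sq_nonneg ((u₁ x - u₂ x)/2)]) (sq_nonneg _)
    have := pow_eq_zero_iff (n := 2) (by norm_num) |>.mp h1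
    linarith
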